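/- For any norm ‖·‖ on a real vector space V with unit sphere S, the intrinsic metric d on S satisfies ‖x−y‖ ≤ d(x,y) ≤ √2·π·‖x−y‖ for all x, y ∈ S. In particular the intrinsic metric and the induced norm metric on S are strongly equivalent. -/

import Mathlib

open Set Real
open scoped ENNReal

/-- The length of a path `ρ` (restricted to `[0,1]`) with respect to a norm-like
function `N`, as the supremum over partitions `0 = t₀ < … < tₙ = 1` of
`∑ N (ρ tⱼ₊₁ - ρ tⱼ)`. -/
noncomputable def pathLength {V : Type*} [AddCommGroup V]
    (N : V → ℝ) (ρ : ℝ → V) : ℝ≥0∞ :=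
  ⨆ p : {q : ℕ × (ℕ → ℝ) // StrictMonoOn q.2 (Set.Iic q.1) ∧ q.2 0 = 0 ∧ q.2 q.1 = 1},
    ENNReal.ofReal (∑ j ∈ Finset.range p.1.1, N (ρ (p.1.2 (j + 1)) - ρ (p.1.2 j)))

/-- The (extended) intrinsic metric on a subset `S`, with respect to a norm-like
function `N`: the infimum of the `N`-lengths of continuous paths in `S` from `x` to `y`. -/
noncomputable def intrinsicDist {V : Type*} [AddCommGroup V] [TopologicalSpace V]
    (N : V → ℝ) (S : Set V) (x y : V) : ℝ≥0∞ :=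
  ⨅ ρ : {ρ : ℝ → V // ContinuousOn ρ (Icc 0 1) ∧ MapsTo ρ (Icc 0 1) S ∧ ρ 0 = x ∧ ρ 1 = y},
    pathLength N ρ

/-- The (extended) planar intrinsic metric on a subset `S`: as `intrinsicDist`, but with
the infimum restricted to paths whose image spans a two-dimensional subspace. -/
noncomputable def planarIntrinsicDist {V : Type*} [AddCommGroup V] [Module ℝ V] [TopologicalSpace V]
    (N : V → ℝ) (S : Set V) (x y : V) : ℝ≥0∞ :=
  ⨅ ρ : {ρ : ℝ → V // ContinuousOn ρ (Icc 0 1) ∧ MapsTo ρ (Icc 0 1) S ∧ ρ 0 = x ∧ ρ 1 = y ∧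
      Module.finrank ℝ (Submodule.span ℝ (ρ '' Icc 0 1)) = 2},
    pathLength N ρ

namespace Stmt8Aux

variable {V : Type*} [NormedAddCommGroup V] [NormedSpace ℝ V]

lemma pathLength_le_of_chord (ρ : ℝ → V) (F : ℝ → ℝ)
    (hF : ∀ s t : ℝ, 0 ≤ s → s ≤ t → t ≤ 1 → ‖ρ t - ρ s‖ ≤ F t - F s) :
    pathLength (fun w => ‖w‖) ρ ≤ ENNReal.ofReal (F 1 - F 0) := by
  apply iSup_le
  rintro ⟨⟨n, f⟩, hmono, hf0, hfn⟩
  simp only at hmono hf0 hfn ⊢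
  apply ENNReal.ofReal_le_ofReal
  have hmem : ∀ j, j ≤ n → 0 ≤ f j ∧ f j ≤ 1 := by
    intro j hj
    constructor
    · rw [← hf0]
      rcases Nat.eq_zero_or_pos j with h | h
      · simp [h]
      · exact le_of_lt (hmono (Set.mem_Iic.mpr (Nat.zero_le n)) (Set.mem_Iic.mpr hj) h)
    · rw [← hfn]
      rcases eq_or_lt_of_le hj with h | h
      · rw [h]
      · exact le_of_lt (hmono (Set.mem_Iic.mpr hj) (Set.mem_Iic.mpr le_rfl) h)
  have hstep : ∀ j ∈ Finset.range n,
      ‖ρ (f (j+1)) - ρ (f j)‖ ≤ F (f (j+1)) - F (f j) := by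
    intro j hj
    have hj' := Finset.mem_range.mp hj
    have h1 := hmem j (le_of_lt hj')
    have h2 := hmem (j+1) hj'
    have hle : f j ≤ f (j+1) :=
      le_of_lt (hmono (Set.mem_Iic.mpr (le_of_lt hj')) (Set.mem_Iic.mpr hj') (Nat.lt_succ_self j))
    exact hF (f j) (f (j+1)) h1.1 hle h2.2
  calc ∑ j ∈ Finset.range n, ‖ρ (f (j+1)) - ρ (f j)‖
      ≤ ∑ j ∈ Finset.range n, (F (f (j+1)) - F (f j)) := Finset.sum_le_sum hstep
    _ = F (f n) - F (f 0) := Finset.sum_range_sub (fun j => F (f j)) n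
    _ = F 1 - F 0 := by rw [hf0, hfn]

lemma intrinsicDist_le_pathLength {S : Set V} {x y : V} (ρ : ℝ → V)
    (hcont : ContinuousOn ρ (Icc 0 1)) (hmaps : MapsTo ρ (Icc 0 1) S)
    (h0 : ρ 0 = x) (h1 : ρ 1 = y) :
    intrinsicDist (fun w => ‖w‖) S x y ≤ pathLength (fun w => ‖w‖) ρ := by
  rw [intrinsicDist]
  exact iInf_le (fun p : {ρ' : ℝ → V // ContinuousOn ρ' (Icc 0 1) ∧
    MapsTo ρ' (Icc 0 1) S ∧ ρ' 0 = x ∧ ρ' 1 = y} => pathLength (fun w => ‖w‖) p.1)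
    ⟨ρ, hcont, hmaps, h0, h1⟩

lemma lower_bound (x y : V) :
    ENNReal.ofReal ‖x - y‖ ≤ intrinsicDist (fun w => ‖w‖) (Metric.sphere (0:V) 1) x y := by
  apply le_iInf
  rintro ⟨ρ, hcont, hmaps, h0, h1⟩
  have hsm : StrictMonoOn (fun j : ℕ => (j : ℝ)) (Set.Iic 1) := by
    intro a _ b _ hab
    show (a : ℝ) < (b : ℝ)
    exact_mod_cast hab
  refine le_trans ?_ (le_iSup _ (⟨(1, fun j : ℕ => (j : ℝ)), hsm, by simp, by simp⟩ :
    {q : ℕ × (ℕ → ℝ) // StrictMonoOn q.2 (Set.Iic q.1) ∧ q.2 0 = 0 ∧ q.2 q.1 = 1}))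
  apply ENNReal.ofReal_le_ofReal
  simp only [Finset.sum_range_one]
  push_cast
  rw [h0, h1, norm_sub_rev]

lemma proj_chord {m : ℝ} (hm : 0 < m) {a b : V} (ha : m ≤ ‖a‖) (hb : m ≤ ‖b‖) :
    ‖‖b‖⁻¹ • b - ‖a‖⁻¹ • a‖ ≤ (2 / m) * ‖b - a‖ := by
  have hA : (0:ℝ) < ‖a‖ := lt_of_lt_of_le hm ha
  have hB : (0:ℝ) < ‖b‖ := lt_of_lt_of_le hm hb
  have key : ‖b‖⁻¹ • b - ‖a‖⁻¹ • a = ‖b‖⁻¹ • (b - a) + (‖b‖⁻¹ - ‖a‖⁻¹) • a := by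
    rw [smul_sub, sub_smul]; abel
  rw [key]
  have habs : |‖a‖ - ‖b‖| ≤ ‖b - a‖ := by
    rw [norm_sub_rev]; exact abs_norm_sub_norm_le a b
  have h1 : ‖‖b‖⁻¹ • (b - a)‖ = ‖b - a‖ / ‖b‖ := by
    rw [norm_smul, Real.norm_eq_abs, abs_of_nonneg (inv_nonneg.mpr (le_of_lt hB)),
      inv_mul_eq_div]
  have h2 : ‖(‖b‖⁻¹ - ‖a‖⁻¹) • a‖ ≤ ‖b - a‖ / ‖b‖ := by
    rw [norm_smul, Real.norm_eq_abs]
    have e1 : |‖b‖⁻¹ - ‖a‖⁻¹| = |‖a‖ - ‖b‖| / (‖b‖ * ‖a‖) := by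
      rw [inv_sub_inv hB.ne' hA.ne', abs_div, abs_of_pos (mul_pos hB hA)]
    rw [e1, div_mul_eq_mul_div, div_le_div_iff₀ (by positivity) hB]
    nlinarith [mul_le_mul_of_nonneg_right habs (mul_pos hA hB).le]
  have h4 : ‖b - a‖ / ‖b‖ ≤ ‖b - a‖ / m := by
    apply div_le_div_of_nonneg_left (norm_nonneg _) hm hb
  calc ‖‖b‖⁻¹ • (b - a) + (‖b‖⁻¹ - ‖a‖⁻¹) • a‖
      ≤ ‖‖b‖⁻¹ • (b - a)‖ + ‖(‖b‖⁻¹ - ‖a‖⁻¹) • a‖ := norm_add_le _ _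
    _ ≤ ‖b - a‖ / ‖b‖ + ‖b - a‖ / ‖b‖ := by rw [h1]; exact add_le_add le_rfl h2
    _ ≤ ‖b - a‖ / m + ‖b - a‖ / m := add_le_add h4 h4
    _ = (2 / m) * ‖b - a‖ := by ring
lemma upper_segment (x y : V) (hx : ‖x‖ = 1) (hy : ‖y‖ = 1) (hr : ‖y - x‖ ≤ 1) :
    intrinsicDist (fun w => ‖w‖) (Metric.sphere (0:V) 1) x y ≤
      ENNReal.ofReal (4 * ‖y - x‖) := by
  set r := ‖y - x‖ with hrdef
  have hr0 : (0:ℝ) ≤ r := norm_nonneg _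
  set c : ℝ → V := fun t => x + t • (y - x) with hc
  have hN : ∀ t, 0 ≤ t → t ≤ 1 → (1:ℝ)/2 ≤ ‖c t‖ := by
    intro t ht0 ht1
    rcases le_or_gt t (1/2) with h | h
    · have h1 : ‖x‖ ≤ ‖c t‖ + ‖t • (y - x)‖ := by
        calc ‖x‖ = ‖c t - t • (y - x)‖ := by simp [hc]
          _ ≤ ‖c t‖ + ‖t • (y - x)‖ := norm_sub_le _ _
      have hts : ‖t • (y - x)‖ = t * r := by
        rw [norm_smul, Real.norm_eq_abs, abs_of_nonneg ht0]
      rw [hx, hts] at h1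
      nlinarith
    · have hid : c t - (1 - t) • (x - y) = y := by
        simp only [hc]; module
      have h1 : ‖y‖ ≤ ‖c t‖ + ‖(1 - t) • (x - y)‖ := by
        calc ‖y‖ = ‖c t - (1 - t) • (x - y)‖ := by rw [hid]
          _ ≤ ‖c t‖ + ‖(1 - t) • (x - y)‖ := norm_sub_le _ _
      have hts : ‖(1 - t) • (x - y)‖ = (1 - t) * r := by
        rw [norm_smul, Real.norm_eq_abs, abs_of_nonneg (by linarith), norm_sub_rev]
      rw [hy, hts] at h1
      nlinarith
  set ρ : ℝ → V := fun t => ‖c t‖⁻¹ • c t with hρ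
  have hne : ∀ t, 0 ≤ t → t ≤ 1 → ‖c t‖ ≠ 0 := by
    intro t ht0 ht1
    have := hN t ht0 ht1
    positivity
  have hchord : ∀ s t : ℝ, 0 ≤ s → s ≤ t → t ≤ 1 →
      ‖ρ t - ρ s‖ ≤ (fun t => 4 * r * t) t - (fun t => 4 * r * t) s := by
    intro s t hs hst ht
    have hcs := hN s hs (le_trans hst ht)
    have hct := hN t (le_trans hs hst) ht
    have hd : c t - c s = (t - s) • (y - x) := by
      simp only [hc]; module
    have hdn : ‖c t - c s‖ = (t - s) * r := by
      rw [hd, norm_smul, Real.norm_eq_abs, abs_of_nonneg (by linarith)]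
    calc ‖ρ t - ρ s‖ ≤ (2 / (1/2)) * ‖c t - c s‖ := proj_chord (by norm_num) hcs hct
      _ = 4 * r * t - 4 * r * s := by rw [hdn]; ring
  have hcont : Continuous c := continuous_const.add (continuous_id.smul continuous_const)
  have hρcont : ContinuousOn ρ (Icc 0 1) := by
    apply ContinuousOn.smul
    · exact (hcont.norm.continuousOn).inv₀ (fun t ht => hne t ht.1 ht.2)
    · exact hcont.continuousOn
  have hmaps : MapsTo ρ (Icc 0 1) (Metric.sphere (0:V) 1) := by
    intro t ht
    rw [mem_sphere_zero_iff_norm]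
    simp only [hρ]
    rw [norm_smul, Real.norm_eq_abs, abs_of_nonneg (inv_nonneg.mpr (norm_nonneg _)),
      inv_mul_cancel₀ (hne t ht.1 ht.2)]
  have h0 : ρ 0 = x := by
    have : c 0 = x := by simp [hc]
    simp only [hρ, this, hx]
    simp
  have h1 : ρ 1 = y := by
    have : c 1 = y := by simp only [hc]; module
    simp only [hρ, this, hy]
    simp
  calc intrinsicDist (fun w => ‖w‖) (Metric.sphere (0:V) 1) x y
      ≤ pathLength (fun w => ‖w‖) ρ := intrinsicDist_le_pathLength ρ hρcont hmaps h0 h1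
    _ ≤ ENNReal.ofReal ((fun t => 4 * r * t) 1 - (fun t => 4 * r * t) 0) :=
        pathLength_le_of_chord ρ _ hchord
    _ = ENNReal.ofReal (4 * r) := by norm_num
lemma core {u v : V} (hu : ‖u‖ = 1) (hv : ‖v‖ = 1)
    (hA : ∀ a b : ℝ, max |a| |b| ≤ ‖a • u + b • v‖)
    {a₁ b₁ a₂ b₂ : ℝ} (ha₁ : 0 ≤ a₁) (hb₁ : 0 ≤ b₁) (ha₂ : 0 ≤ a₂) (hb₂ : 0 ≤ b₂)
    (h1 : ‖a₁ • u + b₁ • v‖ = 1) (h2 : ‖a₂ • u + b₂ • v‖ = 1)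
    (hcross : a₂ * b₁ ≤ a₁ * b₂) : b₁ ≤ b₂ := by
  by_contra hlt
  push_neg at hlt
  have hb₁1 : b₁ ≤ 1 := by
    have h := le_trans (le_max_right |a₁| |b₁|) (hA a₁ b₁)
    rw [h1, abs_of_nonneg hb₁] at h; exact h
  have ha₂1 : a₂ ≤ 1 := by
    have h := le_trans (le_max_left |a₂| |b₂|) (hA a₂ b₂)
    rw [h2, abs_of_nonneg ha₂] at h; exact h
  have hb₁pos : 0 < b₁ := lt_of_le_of_lt hb₂ hlt
  rcases le_or_gt a₂ a₁ with hcase | hcase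
  · -- a₂ ≤ a₁ : strictly dominated point argument
    set D : ℝ := b₁ - b₂ with hD
    have hDpos : 0 < D := sub_pos.mpr hlt
    have hΔa : 0 ≤ a₁ - a₂ := sub_nonneg.mpr hcase
    rcases le_or_gt (b₂ * (a₁ - a₂)) (a₂ * (b₁ - b₂)) with hxf | hyf
    · -- hits the x-axis first
      set s₀ : ℝ := b₂ / D with hs₀
      have hs₀0 : 0 ≤ s₀ := div_nonneg hb₂ hDpos.le
      set w₁ : ℝ := a₂ - s₀ * (a₁ - a₂) with hw₁
      have hw₁0 : 0 ≤ w₁ := by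
        rw [hw₁, hs₀, sub_nonneg, div_mul_eq_mul_div, div_le_iff₀ hDpos]
        calc b₂ * (a₁ - a₂) ≤ a₂ * (b₁ - b₂) := hxf
          _ = a₂ * D := by rw [hD]
      have hw₁a : w₁ ≤ a₂ := by
        rw [hw₁]
        nlinarith
      have hvec : s₀ • (a₁ • u + b₁ • v) + w₁ • u = (1 + s₀) • (a₂ • u + b₂ • v) := by
        rw [hw₁, hs₀]
        match_scalars
        · field_simp
          ring
        · field_simp
          ring
      have hnorm : 1 + s₀ ≤ s₀ + w₁ := by
        have hle : ‖s₀ • (a₁ • u + b₁ • v) + w₁ • u‖ ≤ s₀ + w₁ := by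
          calc ‖s₀ • (a₁ • u + b₁ • v) + w₁ • u‖
              ≤ ‖s₀ • (a₁ • u + b₁ • v)‖ + ‖w₁ • u‖ := norm_add_le _ _
            _ = s₀ + w₁ := by
                rw [norm_smul, norm_smul, h1, hu, Real.norm_eq_abs, Real.norm_eq_abs,
                  abs_of_nonneg hs₀0, abs_of_nonneg hw₁0]
                ring
        have heq : ‖s₀ • (a₁ • u + b₁ • v) + w₁ • u‖ = 1 + s₀ := by
          rw [hvec, norm_smul, h2, Real.norm_eq_abs, abs_of_nonneg (by linarith)]
          ring
        rw [heq] at hle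
        exact hle
      have hw₁1 : w₁ = 1 := le_antisymm (le_trans hw₁a ha₂1) (by linarith)
      have ha₂e : a₂ = 1 := le_antisymm ha₂1 (le_trans (le_of_eq hw₁1.symm) hw₁a)
      have hsΔ : s₀ * (a₁ - a₂) = 0 := by
        rw [hw₁] at hw₁1
        linarith [hw₁1, ha₂e]
      rcases eq_or_lt_of_le hb₂ with hb₂0 | hb₂pos
      · -- b₂ = 0
        rw [← hb₂0, mul_zero, ha₂e, one_mul] at hcross
        linarith
      · have hs₀pos : 0 < s₀ := div_pos hb₂pos hDpos
        have : a₁ - a₂ = 0 := by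
          rcases mul_eq_zero.mp hsΔ with h | h
          · exact absurd h (ne_of_gt hs₀pos)
          · exact h
        have ha₁e : a₁ = 1 := by rw [← ha₂e]; linarith
        rw [ha₁e, ha₂e, one_mul, one_mul] at hcross
        linarith
    · -- hits the y-axis first
      have hΔapos : 0 < a₁ - a₂ := by
        rcases eq_or_lt_of_le hΔa with h | h
        · exfalso
          rw [← h] at hyf
          simp at hyf
          nlinarith
        · exact h
      set s₀ : ℝ := a₂ / (a₁ - a₂) with hs₀
      have hs₀0 : 0 ≤ s₀ := div_nonneg ha₂ hΔapos.le
      set w₂ : ℝ := b₂ - s₀ * D with hw₂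
      have hw₂0 : 0 ≤ w₂ := by
        rw [hw₂, hs₀, sub_nonneg, div_mul_eq_mul_div, div_le_iff₀ hΔapos]
        calc a₂ * D = a₂ * (b₁ - b₂) := by rw [hD]
          _ ≤ b₂ * (a₁ - a₂) := le_of_lt hyf
      have hw₂b : w₂ ≤ b₂ := by
        rw [hw₂]
        nlinarith
      have hvec : s₀ • (a₁ • u + b₁ • v) + w₂ • v = (1 + s₀) • (a₂ • u + b₂ • v) := by
        rw [hw₂, hs₀, hD]
        match_scalars
        · field_simp
          ring
        · field_simp
          ring
      have hnorm : 1 + s₀ ≤ s₀ + w₂ := by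
        have hle : ‖s₀ • (a₁ • u + b₁ • v) + w₂ • v‖ ≤ s₀ + w₂ := by
          calc ‖s₀ • (a₁ • u + b₁ • v) + w₂ • v‖
              ≤ ‖s₀ • (a₁ • u + b₁ • v)‖ + ‖w₂ • v‖ := norm_add_le _ _
            _ = s₀ + w₂ := by
                rw [norm_smul, norm_smul, h1, hv, Real.norm_eq_abs, Real.norm_eq_abs,
                  abs_of_nonneg hs₀0, abs_of_nonneg hw₂0]
                ring
        have heq : ‖s₀ • (a₁ • u + b₁ • v) + w₂ • v‖ = 1 + s₀ := by
          rw [hvec, norm_smul, h2, Real.norm_eq_abs, abs_of_nonneg (by linarith)]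
          ring
        rw [heq] at hle
        exact hle
      linarith
  · -- a₁ < a₂ : impossible
    nlinarith [mul_pos (lt_of_le_of_lt ha₁ hcase) (sub_pos.mpr hlt)]

lemma core2 {u v : V} (hu : ‖u‖ = 1) (hv : ‖v‖ = 1)
    (hA : ∀ a b : ℝ, max |a| |b| ≤ ‖a • u + b • v‖)
    {a₁ b₁ a₂ b₂ : ℝ} (ha₁ : 0 ≤ a₁) (hb₁ : 0 ≤ b₁) (ha₂ : 0 ≤ a₂) (hb₂ : 0 ≤ b₂)
    (h1 : ‖a₁ • u + b₁ • v‖ = 1) (h2 : ‖a₂ • u + b₂ • v‖ = 1)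
    (hcross : a₂ * b₁ ≤ a₁ * b₂) : b₁ ≤ b₂ ∧ a₂ ≤ a₁ := by
  constructor
  · exact core hu hv hA ha₁ hb₁ ha₂ hb₂ h1 h2 hcross
  · have hA' : ∀ a b : ℝ, max |a| |b| ≤ ‖a • v + b • u‖ := by
      intro a b
      rw [add_comm, max_comm]
      exact hA b a
    have h1' : ‖b₂ • v + a₂ • u‖ = 1 := by rw [add_comm]; exact h2
    have h2' : ‖b₁ • v + a₁ • u‖ = 1 := by rw [add_comm]; exact h1
    exact core hv hu hA' hb₂ ha₂ hb₁ ha₁ h1' h2' (by nlinarith [hcross])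
lemma auerbach {x w : V} (hx : ‖x‖ = 1) (hxw : LinearIndependent ℝ ![x, w]) :
    ∃ u v : V, ‖u‖ = 1 ∧ ‖v‖ = 1 ∧ (∀ a b : ℝ, max |a| |b| ≤ ‖a • u + b • v‖) ∧
      (∃ ax bx : ℝ, ax • u + bx • v = x) ∧ (∃ aw bw : ℝ, aw • u + bw • v = w) := by
  classical
  set T : ℝ × ℝ →ₗ[ℝ] V :=
    LinearMap.coprod (LinearMap.toSpanSingleton ℝ V x) (LinearMap.toSpanSingleton ℝ V w) with hT
  have hTapp : ∀ z : ℝ × ℝ, T z = z.1 • x + z.2 • w := by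
    intro z
    simp [hT, LinearMap.toSpanSingleton_apply]
  have hpair := LinearIndependent.pair_iff.mp hxw
  have hTinj : Function.Injective T := by
    rw [← LinearMap.ker_eq_bot, LinearMap.ker_eq_bot']
    intro z hz
    rw [hTapp] at hz
    obtain ⟨h1, h2⟩ := hpair z.1 z.2 hz
    exact Prod.ext h1 h2
  have hTc : Continuous T := T.continuous_of_finiteDimensional
  obtain ⟨C, hbound⟩ : ∃ C : ℝ, ∀ z : ℝ × ℝ, ‖z‖ ≤ C * ‖T z‖ := by
    haveI : FiniteDimensional ℝ ↥(LinearMap.range T) := T.finiteDimensional_range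
    set E := LinearEquiv.ofInjective T hTinj with hE
    set gc := LinearMap.toContinuousLinearMap (E.symm.toLinearMap) with hgc
    refine ⟨‖gc‖, fun z => ?_⟩
    have h1 : E.symm (E z) = z := E.symm_apply_apply z
    have h2 : ‖gc (E z)‖ ≤ ‖gc‖ * ‖E z‖ := gc.le_opNorm _
    have h3 : gc (E z) = z := by
      rw [hgc]
      simpa using h1
    have h4 : ‖E z‖ = ‖T z‖ := by
      have h5 : ((E z : ↥(LinearMap.range T)) : V) = T z := rfl
      rw [← h5]
      rfl
    rw [h3, h4] at h2
    exact h2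
  set S1 : Set (ℝ × ℝ) := {z | ‖T z‖ = 1} with hS1
  have hS1closed : IsClosed S1 := isClosed_eq (hTc.norm) continuous_const
  have hS1bounded : Bornology.IsBounded S1 := by
    rw [isBounded_iff_forall_norm_le]
    refine ⟨C, fun z hz => ?_⟩
    have := hbound z
    rw [Set.mem_setOf_eq.mp hz] at this
    simpa using this
  have hS1cpt : IsCompact S1 := Metric.isCompact_of_isClosed_isBounded hS1closed hS1bounded
  have hK2 : IsCompact (S1 ×ˢ S1) := hS1cpt.prod hS1cpt
  have hwne : w ≠ 0 := by
    intro h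
    obtain ⟨-, h1⟩ := hpair 0 1 (by simp [h])
    norm_num at h1
  have hwpos : (0:ℝ) < ‖w‖ := norm_pos_iff.mpr hwne
  have hz₀ : ((1:ℝ), (0:ℝ)) ∈ S1 ∧ ((0:ℝ), ‖w‖⁻¹) ∈ S1 := by
    constructor
    · show ‖T (1, 0)‖ = 1
      rw [hTapp]
      simp [hx]
    · show ‖T (0, ‖w‖⁻¹)‖ = 1
      rw [hTapp]
      simp [norm_smul, abs_of_nonneg (inv_nonneg.mpr hwpos.le), inv_mul_cancel₀ hwpos.ne']
  have hne : (S1 ×ˢ S1).Nonempty := Set.Nonempty.prod ⟨_, hz₀.1⟩ ⟨_, hz₀.2⟩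
  have hgcont : Continuous (fun z : (ℝ × ℝ) × (ℝ × ℝ) => |z.1.1 * z.2.2 - z.1.2 * z.2.1|) := by
    fun_prop
  obtain ⟨pq, hpqmem, hmax⟩ := hK2.exists_isMaxOn hne hgcont.continuousOn
  set p := pq.1 with hp
  set q := pq.2 with hq
  set M := |p.1 * q.2 - p.2 * q.1| with hM
  have hMpos : 0 < M := by
    have h := hmax (Set.mk_mem_prod hz₀.1 hz₀.2)
    simp only [Set.mem_setOf_eq] at h
    have : |(1:ℝ) * ‖w‖⁻¹ - 0 * 0| ≤ M := h
    rw [one_mul, mul_zero, sub_zero, abs_of_nonneg (inv_nonneg.mpr hwpos.le)] at this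
    exact lt_of_lt_of_le (inv_pos.mpr hwpos) this
  have hdet : p.1 * q.2 - p.2 * q.1 ≠ 0 := by
    intro h
    rw [hM, h, abs_zero] at hMpos
    exact lt_irrefl 0 hMpos
  refine ⟨T p, T q, hpqmem.1, hpqmem.2, ?_, ?_, ?_⟩
  · -- Auerbach property
    intro a b
    have hTz : a • T p + b • T q = T (a • p + b • q) := by
      rw [map_add, map_smul, map_smul]
    rcases eq_or_lt_of_le (norm_nonneg (a • T p + b • T q)) with h0 | hpos
    · -- norm zero
      have hz0 : a • p + b • q = 0 := by
        apply hTinj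
        rw [map_zero, ← hTz, ← norm_eq_zero]
        exact h0.symm
      have hc1 : a * p.1 + b * q.1 = 0 := by
        have := congrArg Prod.fst hz0
        simpa using this
      have hc2 : a * p.2 + b * q.2 = 0 := by
        have := congrArg Prod.snd hz0
        simpa using this
      have ha0 : a = 0 := by
        have : a * (p.1 * q.2 - p.2 * q.1) = 0 := by linear_combination q.2 * hc1 - q.1 * hc2
        rcases mul_eq_zero.mp this with h | h
        · exact h
        · exact absurd h hdet
      have hb0 : b = 0 := by
        have : b * (p.1 * q.2 - p.2 * q.1) = 0 := by linear_combination p.1 * hc2 - p.2 * hc1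
        rcases mul_eq_zero.mp this with h | h
        · exact h
        · exact absurd h hdet
      rw [ha0, hb0]
      simp
    · set t := ‖a • T p + b • T q‖ with ht
      have hza : |a| ≤ t := by
        have hmem' : (t⁻¹ • (a • p + b • q), q) ∈ S1 ×ˢ S1 := by
          constructor
          · show ‖T _‖ = 1
            rw [map_smul, norm_smul, ← hTz, Real.norm_eq_abs,
              abs_of_nonneg (inv_nonneg.mpr (le_of_lt hpos)), ← ht, inv_mul_cancel₀ (ne_of_gt hpos)]
          · exact hpqmem.2
        have h := hmax hmem'
        simp only [Set.mem_setOf_eq] at h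
        have hrw : (t⁻¹ • (a • p + b • q)).1 * q.2 - (t⁻¹ • (a • p + b • q)).2 * q.1
            = t⁻¹ * (a * (p.1 * q.2 - p.2 * q.1)) := by
          simp only [Prod.smul_fst, Prod.smul_snd, Prod.fst_add, Prod.snd_add,
            Prod.smul_fst, Prod.smul_snd, smul_eq_mul]
          ring
        have hcalc : |(t⁻¹ • (a • p + b • q)).1 * q.2 - (t⁻¹ • (a • p + b • q)).2 * q.1|
            = t⁻¹ * (|a| * M) := by
          rw [hrw, abs_mul, abs_mul, abs_of_nonneg (inv_nonneg.mpr (le_of_lt hpos)), ← hM]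
        rw [hcalc] at h
        have : |a| * M ≤ t * M := by
          calc |a| * M = t * (t⁻¹ * (|a| * M)) := by
                field_simp
              _ ≤ t * M := by
                apply mul_le_mul_of_nonneg_left h (le_of_lt hpos)
        exact le_of_mul_le_mul_right this hMpos
      have hzb : |b| ≤ t := by
        have hmem' : (p, t⁻¹ • (a • p + b • q)) ∈ S1 ×ˢ S1 := by
          constructor
          · exact hpqmem.1
          · show ‖T _‖ = 1
            rw [map_smul, norm_smul, ← hTz, Real.norm_eq_abs,
              abs_of_nonneg (inv_nonneg.mpr (le_of_lt hpos)), ← ht, inv_mul_cancel₀ (ne_of_gt hpos)]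
        have h := hmax hmem'
        simp only [Set.mem_setOf_eq] at h
        have hrw : p.1 * (t⁻¹ • (a • p + b • q)).2 - p.2 * (t⁻¹ • (a • p + b • q)).1
            = t⁻¹ * (b * (p.1 * q.2 - p.2 * q.1)) := by
          simp only [Prod.smul_fst, Prod.smul_snd, Prod.fst_add, Prod.snd_add,
            Prod.smul_fst, Prod.smul_snd, smul_eq_mul]
          ring
        have hcalc : |p.1 * (t⁻¹ • (a • p + b • q)).2 - p.2 * (t⁻¹ • (a • p + b • q)).1|
            = t⁻¹ * (|b| * M) := by
          rw [hrw, abs_mul, abs_mul, abs_of_nonneg (inv_nonneg.mpr (le_of_lt hpos)), ← hM]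
        rw [hcalc] at h
        have : |b| * M ≤ t * M := by
          calc |b| * M = t * (t⁻¹ * (|b| * M)) := by
                field_simp
              _ ≤ t * M := by
                apply mul_le_mul_of_nonneg_left h (le_of_lt hpos)
        exact le_of_mul_le_mul_right this hMpos
      exact max_le hza hzb
  · -- coordinates of x
    refine ⟨q.2 / (p.1 * q.2 - p.2 * q.1), -p.2 / (p.1 * q.2 - p.2 * q.1), ?_⟩
    have hcomb : (q.2 / (p.1 * q.2 - p.2 * q.1)) • p +
        (-p.2 / (p.1 * q.2 - p.2 * q.1)) • q = ((1:ℝ), (0:ℝ)) := by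
      apply Prod.ext
      · simp only [Prod.fst_add, Prod.smul_fst, smul_eq_mul]
        rw [div_mul_eq_mul_div, div_mul_eq_mul_div, ← add_div, div_eq_one_iff_eq hdet]
        ring
      · simp only [Prod.snd_add, Prod.smul_snd, smul_eq_mul]
        field_simp
        ring
    calc (q.2 / (p.1 * q.2 - p.2 * q.1)) • T p + (-p.2 / (p.1 * q.2 - p.2 * q.1)) • T q
        = T ((q.2 / (p.1 * q.2 - p.2 * q.1)) • p + (-p.2 / (p.1 * q.2 - p.2 * q.1)) • q) := by
          rw [map_add, map_smul, map_smul]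
      _ = T (1, 0) := by rw [hcomb]
      _ = x := by rw [hTapp]; simp
  · -- coordinates of w
    refine ⟨-q.1 / (p.1 * q.2 - p.2 * q.1), p.1 / (p.1 * q.2 - p.2 * q.1), ?_⟩
    have hcomb : (-q.1 / (p.1 * q.2 - p.2 * q.1)) • p +
        (p.1 / (p.1 * q.2 - p.2 * q.1)) • q = ((0:ℝ), (1:ℝ)) := by
      apply Prod.ext
      · simp only [Prod.fst_add, Prod.smul_fst, smul_eq_mul]
        field_simp
        ring
      · simp only [Prod.snd_add, Prod.smul_snd, smul_eq_mul]
        rw [div_mul_eq_mul_div, div_mul_eq_mul_div, ← add_div, div_eq_one_iff_eq hdet]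
        ring
    calc (-q.1 / (p.1 * q.2 - p.2 * q.1)) • T p + (p.1 / (p.1 * q.2 - p.2 * q.1)) • T q
        = T ((-q.1 / (p.1 * q.2 - p.2 * q.1)) • p + (p.1 / (p.1 * q.2 - p.2 * q.1)) • q) := by
          rw [map_add, map_smul, map_smul]
      _ = T (0, 1) := by rw [hcomb]
      _ = w := by rw [hTapp]; simp
section Arc

noncomputable def Nf (u v : V) (θ : ℝ) : ℝ := ‖Real.cos θ • u + Real.sin θ • v‖

noncomputable def Rf (u v : V) (θ : ℝ) : V :=
  (Nf u v θ)⁻¹ • (Real.cos θ • u + Real.sin θ • v)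

noncomputable def Af (u v : V) (θ : ℝ) : ℝ := Real.cos θ / Nf u v θ

noncomputable def Bf (u v : V) (θ : ℝ) : ℝ := Real.sin θ / Nf u v θ

def cs (n : ℤ) : ℝ := if n % 4 = 2 ∨ n % 4 = 3 then 1 else -1

def ss (n : ℤ) : ℝ := if n % 4 = 0 ∨ n % 4 = 3 then 1 else -1

noncomputable def Ff (u v : V) (θ : ℝ) : ℝ :=
  cs ⌊θ / (π/2)⌋ * Af u v θ + ss ⌊θ / (π/2)⌋ * Bf u v θ + 2 * (⌊θ / (π/2)⌋ : ℝ)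

variable {u v : V}

lemma Npos (hA : ∀ a b : ℝ, max |a| |b| ≤ ‖a • u + b • v‖) (θ : ℝ) :
    0 < Nf u v θ := by
  rcases lt_or_eq_of_le (norm_nonneg (Real.cos θ • u + Real.sin θ • v)) with h | h
  · exact h
  · exfalso
    have hm := hA (Real.cos θ) (Real.sin θ)
    rw [← h] at hm
    have hc : |Real.cos θ| ≤ 0 := le_trans (le_max_left _ _) hm
    have hs : |Real.sin θ| ≤ 0 := le_trans (le_max_right _ _) hm
    have hc0 : Real.cos θ = 0 := abs_eq_zero.mp (le_antisymm hc (abs_nonneg _))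
    have hs0 : Real.sin θ = 0 := abs_eq_zero.mp (le_antisymm hs (abs_nonneg _))
    have := Real.sin_sq_add_cos_sq θ
    rw [hc0, hs0] at this
    norm_num at this

lemma RAB (hA : ∀ a b : ℝ, max |a| |b| ≤ ‖a • u + b • v‖) (θ : ℝ) :
    Rf u v θ = Af u v θ • u + Bf u v θ • v := by
  have hN := Npos hA θ
  rw [Rf, Af, Bf, smul_add, smul_smul, smul_smul, div_eq_inv_mul, div_eq_inv_mul]

lemma Rnorm (hA : ∀ a b : ℝ, max |a| |b| ≤ ‖a • u + b • v‖) (θ : ℝ) :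
    ‖Rf u v θ‖ = 1 := by
  have hN := Npos hA θ
  rw [Rf, norm_smul, Real.norm_eq_abs, abs_of_nonneg (inv_nonneg.mpr hN.le)]
  exact inv_mul_cancel₀ hN.ne'

lemma Nf_shift (j : ℤ) (θ : ℝ) : Nf u v (θ + j * (2 * π)) = Nf u v θ := by
  rw [Nf, Nf, Real.cos_add_int_mul_two_pi, Real.sin_add_int_mul_two_pi]

lemma Af_shift (j : ℤ) (θ : ℝ) : Af u v (θ + j * (2 * π)) = Af u v θ := by
  rw [Af, Af, Nf_shift, Real.cos_add_int_mul_two_pi]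

lemma Bf_shift (j : ℤ) (θ : ℝ) : Bf u v (θ + j * (2 * π)) = Bf u v θ := by
  rw [Bf, Bf, Nf_shift, Real.sin_add_int_mul_two_pi]

lemma Rf_shift (j : ℤ) (θ : ℝ) : Rf u v (θ + j * (2 * π)) = Rf u v θ := by
  rw [Rf, Rf, Nf_shift, Real.cos_add_int_mul_two_pi, Real.sin_add_int_mul_two_pi]

lemma corner_cos (k : ℤ) : Real.cos (k * (π/2)) =
    (if k % 4 = 0 then 1 else if k % 4 = 2 then -1 else 0) := by
  obtain ⟨j, i, hk, hi0, hi4⟩ : ∃ j i : ℤ, k = 4 * j + i ∧ 0 ≤ i ∧ i < 4 :=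
    ⟨k / 4, k % 4, by omega, Int.emod_nonneg k (by norm_num), Int.emod_lt_of_pos k (by norm_num)⟩
  have hmod : k % 4 = i := by omega
  have hθ : (k : ℝ) * (π/2) = (i : ℝ) * (π/2) + j * (2 * π) := by
    rw [hk]; push_cast; ring
  rw [hθ, Real.cos_add_int_mul_two_pi, hmod]
  interval_cases i
  · norm_num
  · norm_num [Real.cos_pi_div_two]
  · rw [show ((2:ℤ):ℝ) * (π/2) = π by push_cast; ring]
    norm_num [Real.cos_pi]
  · rw [show ((3:ℤ):ℝ) * (π/2) = π + π/2 by push_cast; ring]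
    norm_num [Real.cos_add, Real.cos_pi_div_two, Real.sin_pi_div_two, Real.cos_pi, Real.sin_pi]

lemma corner_sin (k : ℤ) : Real.sin (k * (π/2)) =
    (if k % 4 = 1 then 1 else if k % 4 = 3 then -1 else 0) := by
  obtain ⟨j, i, hk, hi0, hi4⟩ : ∃ j i : ℤ, k = 4 * j + i ∧ 0 ≤ i ∧ i < 4 :=
    ⟨k / 4, k % 4, by omega, Int.emod_nonneg k (by norm_num), Int.emod_lt_of_pos k (by norm_num)⟩
  have hmod : k % 4 = i := by omega
  have hθ : (k : ℝ) * (π/2) = (i : ℝ) * (π/2) + j * (2 * π) := by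
    rw [hk]; push_cast; ring
  rw [hθ, Real.sin_add_int_mul_two_pi, hmod]
  interval_cases i
  · norm_num
  · norm_num [Real.sin_pi_div_two]
  · rw [show ((2:ℤ):ℝ) * (π/2) = π by push_cast; ring]
    norm_num [Real.sin_pi]
  · rw [show ((3:ℤ):ℝ) * (π/2) = π + π/2 by push_cast; ring]
    norm_num [Real.sin_add, Real.cos_pi_div_two, Real.sin_pi_div_two, Real.cos_pi, Real.sin_pi]

lemma corner_N (hu : ‖u‖ = 1) (hv : ‖v‖ = 1) (k : ℤ) : Nf u v (k * (π/2)) = 1 := by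
  rw [Nf, corner_cos, corner_sin]
  have h4 : k % 4 = 0 ∨ k % 4 = 1 ∨ k % 4 = 2 ∨ k % 4 = 3 := by omega
  rcases h4 with h | h | h | h <;> simp [h, hu, hv, norm_neg]

lemma corner_A (hu : ‖u‖ = 1) (hv : ‖v‖ = 1) (k : ℤ) :
    Af u v (k * (π/2)) = (if k % 4 = 0 then 1 else if k % 4 = 2 then -1 else 0) := by
  rw [Af, corner_N hu hv, div_one, corner_cos]

lemma corner_B (hu : ‖u‖ = 1) (hv : ‖v‖ = 1) (k : ℤ) :
    Bf u v (k * (π/2)) = (if k % 4 = 1 then 1 else if k % 4 = 3 then -1 else 0) := by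
  rw [Bf, corner_N hu hv, div_one, corner_sin]

lemma FEQ (hu : ‖u‖ = 1) (hv : ‖v‖ = 1) {n : ℤ} {θ : ℝ}
    (h1 : n * (π/2) ≤ θ) (h2 : θ ≤ (n+1) * (π/2)) :
    Ff u v θ = cs n * Af u v θ + ss n * Bf u v θ + 2 * (n : ℝ) := by
  have hπ : (0:ℝ) < π/2 := by positivity
  rcases lt_or_eq_of_le h2 with hlt | heq
  · have hfl : ⌊θ / (π/2)⌋ = n := by
      rw [Int.floor_eq_iff]
      constructor
      · rw [le_div_iff₀ hπ]; exact h1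
      · rw [div_lt_iff₀ hπ]; push_cast; exact hlt
    rw [Ff, hfl]
  · -- θ is the right corner : both formulas agree
    have hfl : ⌊θ / (π/2)⌋ = n + 1 := by
      rw [heq, mul_div_assoc, div_self hπ.ne', mul_one,
        show ((n:ℝ)+1) = ((n+1 : ℤ) : ℝ) by push_cast; ring, Int.floor_intCast]
    rw [Ff, hfl]
    have hθc : θ = ((n+1 : ℤ) : ℝ) * (π/2) := by rw [heq]; push_cast; ring
    rw [hθc, corner_A hu hv, corner_B hu hv]
    have h4 : (n+1) % 4 = 0 ∨ (n+1) % 4 = 1 ∨ (n+1) % 4 = 2 ∨ (n+1) % 4 = 3 := by omega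
    rcases h4 with h | h | h | h <;>
      · rw [cs, cs, ss, ss]
        have hn4 : n % 4 = ((n+1) % 4 + 3) % 4 := by omega
        simp only [h] at hn4 ⊢
        norm_num [hn4]
        push_cast
        ring

end Arc
section Arc2

variable {u v : V}

lemma cross_ineq (hA : ∀ a b : ℝ, max |a| |b| ≤ ‖a • u + b • v‖)
    {θ₁ θ₂ : ℝ} (h12 : θ₁ ≤ θ₂) (hle : θ₂ ≤ θ₁ + π) :
    Af u v θ₂ * Bf u v θ₁ ≤ Af u v θ₁ * Bf u v θ₂ := by
  have hN₁ := Npos hA θ₁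
  have hN₂ := Npos hA θ₂
  have key : Af u v θ₁ * Bf u v θ₂ - Af u v θ₂ * Bf u v θ₁
      = Real.sin (θ₂ - θ₁) / (Nf u v θ₁ * Nf u v θ₂) := by
    rw [Af, Bf, Af, Bf, Real.sin_sub]
    field_simp
  have hsin : 0 ≤ Real.sin (θ₂ - θ₁) :=
    Real.sin_nonneg_of_nonneg_of_le_pi (by linarith) (by linarith)
  have : 0 ≤ Real.sin (θ₂ - θ₁) / (Nf u v θ₁ * Nf u v θ₂) :=
    div_nonneg hsin (mul_pos hN₁ hN₂).le
  linarith [key, this]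

lemma hA_nu (hA : ∀ a b : ℝ, max |a| |b| ≤ ‖a • u + b • v‖) :
    ∀ a b : ℝ, max |a| |b| ≤ ‖a • (-u) + b • v‖ := by
  intro a b
  rw [smul_neg, ← neg_smul]
  have := hA (-a) b
  rwa [abs_neg] at this

lemma hA_nv (hA : ∀ a b : ℝ, max |a| |b| ≤ ‖a • u + b • v‖) :
    ∀ a b : ℝ, max |a| |b| ≤ ‖a • u + b • (-v)‖ := by
  intro a b
  rw [smul_neg, ← neg_smul]
  have := hA a (-b)
  rwa [abs_neg] at this

lemma hA_nn (hA : ∀ a b : ℝ, max |a| |b| ≤ ‖a • u + b • v‖) :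
    ∀ a b : ℝ, max |a| |b| ≤ ‖a • (-u) + b • (-v)‖ :=
  hA_nv (hA_nu hA)

set_option maxHeartbeats 1600000 in
lemma qmono_base (hu : ‖u‖ = 1) (hv : ‖v‖ = 1)
    (hA : ∀ a b : ℝ, max |a| |b| ≤ ‖a • u + b • v‖)
    {i : ℤ} (hi0 : 0 ≤ i) (hi4 : i < 4) {θ₁ θ₂ : ℝ}
    (ha : i * (π/2) ≤ θ₁) (h12 : θ₁ ≤ θ₂) (hb : θ₂ ≤ (i+1) * (π/2)) :
    0 ≤ (Af u v θ₂ - Af u v θ₁) * cs i ∧ 0 ≤ (Bf u v θ₂ - Bf u v θ₁) * ss i := by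
  have hπ : (0:ℝ) < π := Real.pi_pos
  have hN₁ := Npos hA θ₁
  have hN₂ := Npos hA θ₂
  have hP : ∀ θ : ℝ, ‖Af u v θ • u + Bf u v θ • v‖ = 1 := by
    intro θ
    rw [← RAB hA θ]
    exact Rnorm hA θ
  have hcr : Af u v θ₂ * Bf u v θ₁ ≤ Af u v θ₁ * Bf u v θ₂ :=
    cross_ineq hA h12 (by nlinarith)
  have hnu : ‖-u‖ = 1 := by rwa [norm_neg]
  have hnv : ‖-v‖ = 1 := by rwa [norm_neg]
  have hP1 : ∀ θ : ℝ, ‖(-Af u v θ) • (-u) + Bf u v θ • v‖ = 1 := by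
    intro θ
    rw [neg_smul, smul_neg, neg_neg]
    exact hP θ
  have hP2 : ∀ θ : ℝ, ‖(-Af u v θ) • (-u) + (-Bf u v θ) • (-v)‖ = 1 := by
    intro θ
    rw [neg_smul, smul_neg, neg_neg, neg_smul, smul_neg, neg_neg]
    exact hP θ
  have hP3 : ∀ θ : ℝ, ‖Af u v θ • u + (-Bf u v θ) • (-v)‖ = 1 := by
    intro θ
    rw [neg_smul, smul_neg, neg_neg]
    exact hP θ
  interval_cases i
  · -- quadrant 0 : cos ≥ 0, sin ≥ 0
    have hc₁ : 0 ≤ Real.cos θ₁ := Real.cos_nonneg_of_mem_Icc (Set.mem_Icc.mpr ⟨by linarith, by linarith⟩)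
    have hc₂ : 0 ≤ Real.cos θ₂ := Real.cos_nonneg_of_mem_Icc (Set.mem_Icc.mpr ⟨by linarith, by linarith⟩)
    have hs₁ : 0 ≤ Real.sin θ₁ := Real.sin_nonneg_of_nonneg_of_le_pi (by linarith) (by linarith)
    have hs₂ : 0 ≤ Real.sin θ₂ := Real.sin_nonneg_of_nonneg_of_le_pi (by linarith) (by linarith)
    have hA₁ : 0 ≤ Af u v θ₁ := div_nonneg hc₁ hN₁.le
    have hA₂ : 0 ≤ Af u v θ₂ := div_nonneg hc₂ hN₂.le
    have hB₁ : 0 ≤ Bf u v θ₁ := div_nonneg hs₁ hN₁.le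
    have hB₂ : 0 ≤ Bf u v θ₂ := div_nonneg hs₂ hN₂.le
    obtain ⟨hmb, hma⟩ := core2 hu hv hA hA₁ hB₁ hA₂ hB₂ (hP θ₁) (hP θ₂) hcr
    constructor
    · have : cs 0 = -1 := by norm_num [cs]
      rw [this]; nlinarith
    · have : ss 0 = 1 := by norm_num [ss]
      rw [this]; nlinarith
  · -- quadrant 1 : cos ≤ 0, sin ≥ 0
    have hc₁ : Real.cos θ₁ ≤ 0 := Real.cos_nonpos_of_pi_div_two_le_of_le (by linarith) (by linarith)
    have hc₂ : Real.cos θ₂ ≤ 0 := Real.cos_nonpos_of_pi_div_two_le_of_le (by linarith) (by linarith)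
    have hs₁ : 0 ≤ Real.sin θ₁ := Real.sin_nonneg_of_nonneg_of_le_pi (by linarith) (by linarith)
    have hs₂ : 0 ≤ Real.sin θ₂ := Real.sin_nonneg_of_nonneg_of_le_pi (by linarith) (by linarith)
    have hA₁ : Af u v θ₁ ≤ 0 := div_nonpos_of_nonpos_of_nonneg hc₁ hN₁.le
    have hA₂ : Af u v θ₂ ≤ 0 := div_nonpos_of_nonpos_of_nonneg hc₂ hN₂.le
    have hB₁ : 0 ≤ Bf u v θ₁ := div_nonneg hs₁ hN₁.le
    have hB₂ : 0 ≤ Bf u v θ₂ := div_nonneg hs₂ hN₂.le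
    obtain ⟨hmb, hma⟩ := core2 hnu hv (hA_nu hA) (neg_nonneg.mpr hA₂) hB₂
      (neg_nonneg.mpr hA₁) hB₁ (hP1 θ₂) (hP1 θ₁) (by nlinarith)
    constructor
    · have : cs 1 = -1 := by norm_num [cs]
      rw [this]; nlinarith
    · have : ss 1 = -1 := by norm_num [ss]
      rw [this]; nlinarith
  · -- quadrant 2 : cos ≤ 0, sin ≤ 0
    have hc₁ : Real.cos θ₁ ≤ 0 := Real.cos_nonpos_of_pi_div_two_le_of_le (by linarith) (by linarith)
    have hc₂ : Real.cos θ₂ ≤ 0 := Real.cos_nonpos_of_pi_div_two_le_of_le (by linarith) (by linarith)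
    have hs₁ : Real.sin θ₁ ≤ 0 := by
      have h := Real.sin_nonneg_of_nonneg_of_le_pi (x := θ₁ - π) (by linarith) (by linarith)
      rw [Real.sin_sub_pi] at h
      linarith
    have hs₂ : Real.sin θ₂ ≤ 0 := by
      have h := Real.sin_nonneg_of_nonneg_of_le_pi (x := θ₂ - π) (by linarith) (by linarith)
      rw [Real.sin_sub_pi] at h
      linarith
    have hA₁ : Af u v θ₁ ≤ 0 := div_nonpos_of_nonpos_of_nonneg hc₁ hN₁.le
    have hA₂ : Af u v θ₂ ≤ 0 := div_nonpos_of_nonpos_of_nonneg hc₂ hN₂.le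
    have hB₁ : Bf u v θ₁ ≤ 0 := div_nonpos_of_nonpos_of_nonneg hs₁ hN₁.le
    have hB₂ : Bf u v θ₂ ≤ 0 := div_nonpos_of_nonpos_of_nonneg hs₂ hN₂.le
    obtain ⟨hmb, hma⟩ := core2 hnu hnv (hA_nn hA) (neg_nonneg.mpr hA₁) (neg_nonneg.mpr hB₁)
      (neg_nonneg.mpr hA₂) (neg_nonneg.mpr hB₂) (hP2 θ₁) (hP2 θ₂) (by nlinarith)
    constructor
    · have : cs 2 = 1 := by norm_num [cs]
      rw [this]; nlinarith
    · have : ss 2 = -1 := by norm_num [ss]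
      rw [this]; nlinarith
  · -- quadrant 3 : cos ≥ 0, sin ≤ 0
    have hc₁ : 0 ≤ Real.cos θ₁ := by
      have h := Real.cos_nonneg_of_mem_Icc (x := θ₁ - 2*π) (Set.mem_Icc.mpr ⟨by linarith, by linarith⟩)
      rwa [Real.cos_sub_two_pi] at h
    have hc₂ : 0 ≤ Real.cos θ₂ := by
      have h := Real.cos_nonneg_of_mem_Icc (x := θ₂ - 2*π) (Set.mem_Icc.mpr ⟨by linarith, by linarith⟩)
      rwa [Real.cos_sub_two_pi] at h
    have hs₁ : Real.sin θ₁ ≤ 0 := by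
      have h := Real.sin_nonpos_of_nonpos_of_neg_pi_le (x := θ₁ - 2*π) (by linarith) (by linarith)
      rwa [Real.sin_sub_two_pi] at h
    have hs₂ : Real.sin θ₂ ≤ 0 := by
      have h := Real.sin_nonpos_of_nonpos_of_neg_pi_le (x := θ₂ - 2*π) (by linarith) (by linarith)
      rwa [Real.sin_sub_two_pi] at h
    have hA₁ : 0 ≤ Af u v θ₁ := div_nonneg hc₁ hN₁.le
    have hA₂ : 0 ≤ Af u v θ₂ := div_nonneg hc₂ hN₂.le
    have hB₁ : Bf u v θ₁ ≤ 0 := div_nonpos_of_nonpos_of_nonneg hs₁ hN₁.le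
    have hB₂ : Bf u v θ₂ ≤ 0 := div_nonpos_of_nonpos_of_nonneg hs₂ hN₂.le
    obtain ⟨hmb, hma⟩ := core2 hu hnv (hA_nv hA) hA₂ (neg_nonneg.mpr hB₂)
      hA₁ (neg_nonneg.mpr hB₁) (hP3 θ₂) (hP3 θ₁) (by nlinarith)
    constructor
    · have : cs 3 = 1 := by norm_num [cs]
      rw [this]; nlinarith
    · have : ss 3 = 1 := by norm_num [ss]
      rw [this]; nlinarith

end Arc2
section Arc3

variable {u v : V}

lemma cs_pm (n : ℤ) : cs n = 1 ∨ cs n = -1 := by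
  rw [cs]; split
  · exact Or.inl rfl
  · exact Or.inr rfl

lemma ss_pm (n : ℤ) : ss n = 1 ∨ ss n = -1 := by
  rw [ss]; split
  · exact Or.inl rfl
  · exact Or.inr rfl

lemma abs_eq_mul_pm {x c : ℝ} (hc : c = 1 ∨ c = -1) (h : 0 ≤ x * c) : |x| = x * c := by
  rcases hc with h1 | h1 <;> subst h1
  · rw [mul_one] at h ⊢
    exact abs_of_nonneg h
  · rw [mul_neg_one] at h ⊢
    rw [abs_of_nonpos (by linarith)]

lemma qmono (hu : ‖u‖ = 1) (hv : ‖v‖ = 1)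
    (hA : ∀ a b : ℝ, max |a| |b| ≤ ‖a • u + b • v‖)
    {n : ℤ} {θ₁ θ₂ : ℝ}
    (ha : (n:ℝ) * (π/2) ≤ θ₁) (h12 : θ₁ ≤ θ₂) (hb : θ₂ ≤ ((n:ℝ)+1) * (π/2)) :
    0 ≤ (Af u v θ₂ - Af u v θ₁) * cs n ∧ 0 ≤ (Bf u v θ₂ - Bf u v θ₁) * ss n := by
  obtain ⟨j, i, hk, hi0, hi4⟩ : ∃ j i : ℤ, n = 4 * j + i ∧ 0 ≤ i ∧ i < 4 :=
    ⟨n / 4, n % 4, by omega, Int.emod_nonneg n (by norm_num), Int.emod_lt_of_pos n (by norm_num)⟩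
  have hcs : cs n = cs i := by
    rw [cs, cs]
    have h4 : n % 4 = i % 4 := by omega
    rw [h4]
  have hss : ss n = ss i := by
    rw [ss, ss]
    have h4 : n % 4 = i % 4 := by omega
    rw [h4]
  have hn : (n:ℝ) = 4 * (j:ℝ) + (i:ℝ) := by exact_mod_cast congrArg (Int.cast : ℤ → ℝ) hk
  have e1 : Af u v θ₁ = Af u v (θ₁ - j * (2*π)) := by
    conv_lhs => rw [show θ₁ = (θ₁ - j * (2*π)) + j * (2*π) by ring]
    rw [Af_shift]
  have e2 : Af u v θ₂ = Af u v (θ₂ - j * (2*π)) := by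
    conv_lhs => rw [show θ₂ = (θ₂ - j * (2*π)) + j * (2*π) by ring]
    rw [Af_shift]
  have f1 : Bf u v θ₁ = Bf u v (θ₁ - j * (2*π)) := by
    conv_lhs => rw [show θ₁ = (θ₁ - j * (2*π)) + j * (2*π) by ring]
    rw [Bf_shift]
  have f2 : Bf u v θ₂ = Bf u v (θ₂ - j * (2*π)) := by
    conv_lhs => rw [show θ₂ = (θ₂ - j * (2*π)) + j * (2*π) by ring]
    rw [Bf_shift]
  rw [e1, e2, f1, f2, hcs, hss]
  apply qmono_base hu hv hA hi0 hi4 (θ₁ := θ₁ - j * (2*π)) (θ₂ := θ₂ - j * (2*π))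
  · nlinarith [ha, hn]
  · linarith
  · nlinarith [hb, hn]

lemma qstep (hu : ‖u‖ = 1) (hv : ‖v‖ = 1)
    (hA : ∀ a b : ℝ, max |a| |b| ≤ ‖a • u + b • v‖)
    {n : ℤ} {θ₁ θ₂ : ℝ}
    (ha : (n:ℝ) * (π/2) ≤ θ₁) (h12 : θ₁ ≤ θ₂) (hb : θ₂ ≤ ((n:ℝ)+1) * (π/2)) :
    ‖Rf u v θ₂ - Rf u v θ₁‖ ≤ Ff u v θ₂ - Ff u v θ₁ := by
  have h1b : θ₁ ≤ ((n:ℝ)+1) * (π/2) := le_trans h12 hb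
  have h2a : (n:ℝ) * (π/2) ≤ θ₂ := le_trans ha h12
  obtain ⟨hqa, hqb⟩ := qmono hu hv hA ha h12 hb
  have hRdiff : Rf u v θ₂ - Rf u v θ₁
      = (Af u v θ₂ - Af u v θ₁) • u + (Bf u v θ₂ - Bf u v θ₁) • v := by
    rw [RAB hA, RAB hA]
    module
  have habsA : |Af u v θ₂ - Af u v θ₁| = (Af u v θ₂ - Af u v θ₁) * cs n :=
    abs_eq_mul_pm (cs_pm n) hqa
  have habsB : |Bf u v θ₂ - Bf u v θ₁| = (Bf u v θ₂ - Bf u v θ₁) * ss n :=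
    abs_eq_mul_pm (ss_pm n) hqb
  rw [FEQ hu hv h2a hb, FEQ hu hv ha h1b]
  calc ‖Rf u v θ₂ - Rf u v θ₁‖
      = ‖(Af u v θ₂ - Af u v θ₁) • u + (Bf u v θ₂ - Bf u v θ₁) • v‖ := by rw [hRdiff]
    _ ≤ ‖(Af u v θ₂ - Af u v θ₁) • u‖ + ‖(Bf u v θ₂ - Bf u v θ₁) • v‖ := norm_add_le _ _
    _ = |Af u v θ₂ - Af u v θ₁| + |Bf u v θ₂ - Bf u v θ₁| := by
        rw [norm_smul, norm_smul, hu, hv, Real.norm_eq_abs, Real.norm_eq_abs, mul_one, mul_one]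
    _ = (cs n * Af u v θ₂ + ss n * Bf u v θ₂ + 2 * (n:ℝ))
        - (cs n * Af u v θ₁ + ss n * Bf u v θ₁ + 2 * (n:ℝ)) := by
        rw [habsA, habsB]; ring

lemma gchord (hu : ‖u‖ = 1) (hv : ‖v‖ = 1)
    (hA : ∀ a b : ℝ, max |a| |b| ≤ ‖a • u + b • v‖) :
    ∀ θ₁ θ₂ : ℝ, θ₁ ≤ θ₂ → ‖Rf u v θ₂ - Rf u v θ₁‖ ≤ Ff u v θ₂ - Ff u v θ₁ := by
  have hπ : (0:ℝ) < π/2 := by positivity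
  have hfla : ∀ θ : ℝ, (⌊θ / (π/2)⌋ : ℝ) * (π/2) ≤ θ := by
    intro θ
    have := Int.floor_le (θ / (π/2))
    calc (⌊θ / (π/2)⌋ : ℝ) * (π/2) ≤ (θ / (π/2)) * (π/2) := by nlinarith
      _ = θ := by field_simp
  have hflb : ∀ θ : ℝ, θ < ((⌊θ / (π/2)⌋ : ℝ) + 1) * (π/2) := by
    intro θ
    have := Int.lt_floor_add_one (θ / (π/2))
    calc θ = (θ / (π/2)) * (π/2) := by field_simp
      _ < ((⌊θ / (π/2)⌋ : ℝ) + 1) * (π/2) := by nlinarith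
  have key : ∀ k : ℕ, ∀ θ₁ θ₂ : ℝ, θ₁ ≤ θ₂ → ⌊θ₂ / (π/2)⌋ - ⌊θ₁ / (π/2)⌋ ≤ (k:ℤ) →
      ‖Rf u v θ₂ - Rf u v θ₁‖ ≤ Ff u v θ₂ - Ff u v θ₁ := by
    intro k
    induction k with
    | zero =>
      intro θ₁ θ₂ h12 hk
      have hmono : ⌊θ₁ / (π/2)⌋ ≤ ⌊θ₂ / (π/2)⌋ :=
        Int.floor_le_floor (by gcongr)
      have heq : ⌊θ₂ / (π/2)⌋ = ⌊θ₁ / (π/2)⌋ := by omega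
      have hb2 : θ₂ < ((⌊θ₁ / (π/2)⌋ : ℝ) + 1) * (π/2) := by
        rw [← heq]
        exact hflb θ₂
      exact qstep hu hv hA (hfla θ₁) h12 (le_of_lt hb2)
    | succ k ih =>
      intro θ₁ θ₂ h12 hk
      by_cases hcase : ⌊θ₂ / (π/2)⌋ - ⌊θ₁ / (π/2)⌋ ≤ (k:ℤ)
      · exact ih θ₁ θ₂ h12 hcase
      · push_neg at hcase
        set n₁ := ⌊θ₁ / (π/2)⌋ with hn₁
        set κ := ((n₁:ℝ) + 1) * (π/2) with hκ
        have hθ₁κ : θ₁ ≤ κ := le_of_lt (hflb θ₁)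
        have hκθ₂ : κ ≤ θ₂ := by
          have h2 : ((n₁ + 1 : ℤ):ℝ) ≤ ⌊θ₂ / (π/2)⌋ := by exact_mod_cast by omega
          have h3 : ((⌊θ₂ / (π/2)⌋ : ℤ):ℝ) * (π/2) ≤ θ₂ := hfla θ₂
          rw [hκ]
          push_cast at h2 ⊢
          nlinarith
        have hflκ : ⌊κ / (π/2)⌋ = n₁ + 1 := by
          rw [hκ, mul_div_assoc, div_self hπ.ne', mul_one,
            show ((n₁:ℝ)+1) = ((n₁+1 : ℤ) : ℝ) by push_cast; ring, Int.floor_intCast]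
        have hik : ⌊θ₂ / (π/2)⌋ - ⌊κ / (π/2)⌋ ≤ (k:ℤ) := by
          rw [hflκ]; omega
        have h1 : ‖Rf u v θ₂ - Rf u v κ‖ ≤ Ff u v θ₂ - Ff u v κ := ih κ θ₂ hκθ₂ hik
        have h2 : ‖Rf u v κ - Rf u v θ₁‖ ≤ Ff u v κ - Ff u v θ₁ :=
          qstep hu hv hA (hfla θ₁) hθ₁κ (le_of_eq (by rw [hκ]))
        have h3 : ‖Rf u v θ₂ - Rf u v θ₁‖ ≤ ‖Rf u v θ₂ - Rf u v κ‖ + ‖Rf u v κ - Rf u v θ₁‖ := by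
          have : Rf u v θ₂ - Rf u v θ₁ = (Rf u v θ₂ - Rf u v κ) + (Rf u v κ - Rf u v θ₁) := by
            abel
          rw [this]
          exact norm_add_le _ _
        linarith
  intro θ₁ θ₂ h12
  apply key (⌊θ₂ / (π/2)⌋ - ⌊θ₁ / (π/2)⌋).toNat θ₁ θ₂ h12
  exact Int.self_le_toNat _

end Arc3
section Arc4

variable {u v : V}

lemma Ff_shift (θ : ℝ) : Ff u v (θ + 2*π) = Ff u v θ + 8 := by
  have hπ : (0:ℝ) < π/2 := by positivity
  have hdiv : (θ + 2*π)/(π/2) = θ/(π/2) + ((4:ℤ):ℝ) := by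
    push_cast
    field_simp
    ring
  have hfl : ⌊(θ + 2*π)/(π/2)⌋ = ⌊θ/(π/2)⌋ + 4 := by rw [hdiv, Int.floor_add_intCast]
  have hA4 : Af u v (θ + 2*π) = Af u v θ := by
    rw [show θ + 2*π = θ + ((1:ℤ):ℝ)*(2*π) by push_cast; ring, Af_shift]
  have hB4 : Bf u v (θ + 2*π) = Bf u v θ := by
    rw [show θ + 2*π = θ + ((1:ℤ):ℝ)*(2*π) by push_cast; ring, Bf_shift]
  have hcs : cs (⌊θ/(π/2)⌋ + 4) = cs ⌊θ/(π/2)⌋ := by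
    rw [cs, cs]
    have h4 : (⌊θ/(π/2)⌋ + 4) % 4 = ⌊θ/(π/2)⌋ % 4 := by omega
    rw [h4]
  have hss : ss (⌊θ/(π/2)⌋ + 4) = ss ⌊θ/(π/2)⌋ := by
    rw [ss, ss]
    have h4 : (⌊θ/(π/2)⌋ + 4) % 4 = ⌊θ/(π/2)⌋ % 4 := by omega
    rw [h4]
  rw [Ff, Ff, hfl, hA4, hB4, hcs, hss]
  push_cast
  ring

lemma Ff_mono (hu : ‖u‖ = 1) (hv : ‖v‖ = 1)
    (hA : ∀ a b : ℝ, max |a| |b| ≤ ‖a • u + b • v‖)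
    {θ₁ θ₂ : ℝ} (h : θ₁ ≤ θ₂) : Ff u v θ₁ ≤ Ff u v θ₂ := by
  have h1 := gchord hu hv hA θ₁ θ₂ h
  have h2 := norm_nonneg (Rf u v θ₂ - Rf u v θ₁)
  linarith

lemma Rf_cont (hA : ∀ a b : ℝ, max |a| |b| ≤ ‖a • u + b • v‖) :
    Continuous (Rf u v) := by
  have hvc : Continuous (fun θ : ℝ => Real.cos θ • u + Real.sin θ • v) :=
    (Real.continuous_cos.smul continuous_const).add (Real.continuous_sin.smul continuous_const)
  have hNc : Continuous (Nf u v) := hvc.norm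
  exact (hNc.inv₀ (fun θ => (Npos hA θ).ne')).smul hvc

lemma mkpath (hu : ‖u‖ = 1) (hv : ‖v‖ = 1)
    (hA : ∀ a b : ℝ, max |a| |b| ≤ ‖a • u + b • v‖) (θ0 θ1 : ℝ) :
    intrinsicDist (fun w => ‖w‖) (Metric.sphere (0:V) 1) (Rf u v θ0) (Rf u v θ1) ≤
      ENNReal.ofReal (|Ff u v θ1 - Ff u v θ0|) := by
  set σ : ℝ → V := fun t => Rf u v (θ0 + t * (θ1 - θ0)) with hσ
  have hσc : ContinuousOn σ (Icc 0 1) := by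
    apply Continuous.continuousOn
    exact (Rf_cont hA).comp (by continuity)
  have hmaps : MapsTo σ (Icc 0 1) (Metric.sphere (0:V) 1) := by
    intro t _
    exact mem_sphere_zero_iff_norm.mpr (Rnorm hA _)
  have h0 : σ 0 = Rf u v θ0 := by
    simp only [hσ]
    norm_num
  have h1 : σ 1 = Rf u v θ1 := by
    simp only [hσ]
    norm_num
  set G : ℝ → ℝ := fun t => if θ0 ≤ θ1 then Ff u v (θ0 + t * (θ1 - θ0))
    else -Ff u v (θ0 + t * (θ1 - θ0)) with hG
  have hchord : ∀ s t : ℝ, 0 ≤ s → s ≤ t → t ≤ 1 → ‖σ t - σ s‖ ≤ G t - G s := by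
    intro s t hs hst ht
    by_cases hdir : θ0 ≤ θ1
    · simp only [hσ, hG, if_pos hdir]
      apply gchord hu hv hA
      nlinarith
    · push_neg at hdir
      simp only [hσ, hG, if_neg (not_le.mpr hdir)]
      rw [norm_sub_rev]
      have h := gchord hu hv hA (θ0 + t * (θ1 - θ0)) (θ0 + s * (θ1 - θ0)) (by nlinarith)
      linarith
  have hG10 : G 1 - G 0 = |Ff u v θ1 - Ff u v θ0| := by
    have e1 : θ0 + 1 * (θ1 - θ0) = θ1 := by ring
    have e0 : θ0 + 0 * (θ1 - θ0) = θ0 := by ring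
    by_cases hdir : θ0 ≤ θ1
    · simp only [hG, if_pos hdir, e1, e0]
      rw [abs_of_nonneg (by linarith [Ff_mono hu hv hA hdir])]
    · push_neg at hdir
      simp only [hG, if_neg (not_le.mpr hdir), e1, e0]
      rw [abs_of_nonpos (by linarith [Ff_mono hu hv hA hdir.le])]
      ring
  calc intrinsicDist (fun w => ‖w‖) (Metric.sphere (0:V) 1) (Rf u v θ0) (Rf u v θ1)
      ≤ pathLength (fun w => ‖w‖) σ := intrinsicDist_le_pathLength σ hσc hmaps h0 h1
    _ ≤ ENNReal.ofReal (G 1 - G 0) := pathLength_le_of_chord σ G hchord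
    _ = ENNReal.ofReal (|Ff u v θ1 - Ff u v θ0|) := by rw [hG10]

lemma arc_bound (hu : ‖u‖ = 1) (hv : ‖v‖ = 1)
    (hA : ∀ a b : ℝ, max |a| |b| ≤ ‖a • u + b • v‖)
    {θx θy : ℝ} (hd : |θx - θy| ≤ 2*π) :
    intrinsicDist (fun w => ‖w‖) (Metric.sphere (0:V) 1) (Rf u v θx) (Rf u v θy) ≤
      ENNReal.ofReal 4 := by
  rcases le_or_gt θx θy with hxy | hxy
  · have hL0 : 0 ≤ Ff u v θy - Ff u v θx := by linarith [Ff_mono hu hv hA hxy]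
    have hL8 : Ff u v θy - Ff u v θx ≤ 8 := by
      have h1 : Ff u v θy ≤ Ff u v (θx + 2*π) :=
        Ff_mono hu hv hA (by rw [abs_le] at hd; linarith)
      have h2 := Ff_shift (u := u) (v := v) θx
      linarith
    by_cases hL : Ff u v θy - Ff u v θx ≤ 4
    · refine le_trans (mkpath hu hv hA θx θy) (ENNReal.ofReal_le_ofReal ?_)
      rw [abs_of_nonneg hL0]
      exact hL
    · have hper : Rf u v (θy - 2*π) = Rf u v θy := by
        conv_rhs => rw [show θy = (θy - 2*π) + ((1:ℤ):ℝ)*(2*π) by push_cast; ring]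
        rw [Rf_shift]
      have hmk := mkpath hu hv hA θx (θy - 2*π)
      rw [hper] at hmk
      refine le_trans hmk (ENNReal.ofReal_le_ofReal ?_)
      have hFs : Ff u v (θy - 2*π) = Ff u v θy - 8 := by
        have h := Ff_shift (u := u) (v := v) (θy - 2*π)
        rw [show θy - 2*π + 2*π = θy by ring] at h
        linarith
      rw [hFs, abs_of_nonpos (by linarith)]
      linarith
  · have hL0 : 0 ≤ Ff u v θx - Ff u v θy := by linarith [Ff_mono hu hv hA hxy.le]
    have hL8 : Ff u v θx - Ff u v θy ≤ 8 := by
      have h1 : Ff u v θx ≤ Ff u v (θy + 2*π) :=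
        Ff_mono hu hv hA (by rw [abs_le] at hd; linarith)
      have h2 := Ff_shift (u := u) (v := v) θy
      linarith
    by_cases hL : Ff u v θx - Ff u v θy ≤ 4
    · refine le_trans (mkpath hu hv hA θx θy) (ENNReal.ofReal_le_ofReal ?_)
      rw [abs_of_nonpos (by linarith)]
      linarith
    · have hper : Rf u v (θy + 2*π) = Rf u v θy := by
        rw [show θy + 2*π = θy + ((1:ℤ):ℝ)*(2*π) by push_cast; ring, Rf_shift]
      have hmk := mkpath hu hv hA θx (θy + 2*π)
      rw [hper] at hmk
      refine le_trans hmk (ENNReal.ofReal_le_ofReal ?_)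
      have hFs : Ff u v (θy + 2*π) = Ff u v θy + 8 := Ff_shift (u := u) (v := v) θy
      rw [hFs, abs_of_nonneg (by linarith)]
      linarith

end Arc4
lemma upper_arc (hdim : 2 ≤ Module.rank ℝ V) (x y : V) (hx : ‖x‖ = 1) (hy : ‖y‖ = 1)
    (hr : 1 ≤ ‖x - y‖) :
    intrinsicDist (fun w => ‖w‖) (Metric.sphere (0:V) 1) x y ≤ ENNReal.ofReal 4 := by
  have hx0 : x ≠ 0 := by
    intro h
    rw [h, norm_zero] at hx
    norm_num at hx
  -- Step 1 : find w with ![x,w] independent and y a combination of x and w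
  obtain ⟨w, hxw, c1, c2, hyc⟩ :
      ∃ w : V, LinearIndependent ℝ ![x, w] ∧ ∃ c1 c2 : ℝ, c1 • x + c2 • w = y := by
    by_cases hind : LinearIndependent ℝ ![x, y]
    · exact ⟨y, hind, 0, 1, by simp⟩
    · have hind' : y = 0 ∨ ∃ a : ℝ, a • y = x := by
        by_contra hcon
        push_neg at hcon
        apply hind
        rw [linearIndependent_fin2]
        constructor
        · simpa using hcon.1
        · intro a
          simpa using hcon.2 a
      have hy0 : y ≠ 0 := by
        intro h
        rw [h, norm_zero] at hy
        norm_num at hy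
      obtain ⟨a, hax⟩ := hind'.resolve_left hy0
      have ha1 : |a| = 1 := by
        have : ‖a • y‖ = 1 := by rw [hax, hx]
        rwa [norm_smul, hy, mul_one, Real.norm_eq_abs] at this
      rcases abs_eq (by norm_num : (0:ℝ) ≤ 1) |>.mp ha1 with ha | ha
      · exfalso
        rw [ha, one_smul] at hax
        rw [← hax] at hr
        simp at hr
        linarith
      · have hyx : y = -x := by
          rw [← hax, ha]
          simp
        obtain ⟨z, hz⟩ : ∃ z : V, z ∉ Submodule.span ℝ ({x} : Set V) := by
          by_contra h
          push_neg at h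
          have htop : Submodule.span ℝ ({x} : Set V) = ⊤ :=
            eq_top_iff.mpr (fun z _ => h z)
          have h1 : Module.rank ℝ ↥(Submodule.span ℝ ({x} : Set V)) ≤ 1 := by
            refine le_trans (rank_span_le _) ?_
            rw [Cardinal.mk_singleton]
          have h2 : Module.rank ℝ V ≤ 1 := by
            rw [← rank_top ℝ V, ← htop]
            exact h1
          have := le_trans hdim h2
          exact absurd this (by norm_num)
        have hxz : LinearIndependent ℝ ![x, z] := by
          rw [linearIndependent_fin2]
          constructor
          · simp only [Matrix.cons_val_one, Matrix.head_cons, Matrix.cons_val_zero]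
            intro h
            exact hz (h ▸ Submodule.zero_mem _)
          · intro a
            simp only [Matrix.cons_val_one, Matrix.head_cons, Matrix.cons_val_zero]
            intro h
            have ha0 : a ≠ 0 := by
              intro h0
              rw [h0, zero_smul] at h
              exact hx0 h.symm
            apply hz
            rw [Submodule.mem_span_singleton]
            exact ⟨a⁻¹, by rw [← h, smul_smul, inv_mul_cancel₀ ha0, one_smul]⟩
        exact ⟨z, hxz, -1, 0, by rw [hyx]; simp⟩
  -- Step 2 : Auerbach basis of the plane spanned by x, w
  obtain ⟨u, v, hu, hv, hA, ⟨ax, bx, hxc⟩, ⟨aw, bw, hwc⟩⟩ := auerbach hx hxw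
  have hyc' : (c1 * ax + c2 * aw) • u + (c1 * bx + c2 * bw) • v = y := by
    rw [← hyc, ← hxc, ← hwc]
    module
  set ay := c1 * ax + c2 * aw with hay
  set byy := c1 * bx + c2 * bw with hbyy
  -- Step 3 : angles
  have hxnz : (⟨ax, bx⟩ : ℂ) ≠ 0 := by
    intro h
    rw [Complex.ext_iff] at h
    simp only [Complex.zero_re, Complex.zero_im] at h
    apply hx0
    rw [← hxc, h.1, h.2]
    simp
  have hynz : (⟨ay, byy⟩ : ℂ) ≠ 0 := by
    intro h
    rw [Complex.ext_iff] at h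
    simp only [Complex.zero_re, Complex.zero_im] at h
    have hy0 : y ≠ 0 := by
      intro h'
      rw [h', norm_zero] at hy
      norm_num at hy
    apply hy0
    rw [← hyc', h.1, h.2]
    simp
  set θx := Complex.arg ⟨ax, bx⟩ with hθx
  set θy := Complex.arg ⟨ay, byy⟩ with hθy
  have hRX : Rf u v θx = x := by
    set dx := ‖(⟨ax, bx⟩ : ℂ)‖ with hdx
    have hdxpos : 0 < dx := norm_pos_iff.mpr hxnz
    have hcos : Real.cos θx = ax / dx := Complex.cos_arg hxnz
    have hsin : Real.sin θx = bx / dx := Complex.sin_arg _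
    have hvec : Real.cos θx • u + Real.sin θx • v = dx⁻¹ • x := by
      rw [hcos, hsin, ← hxc]
      match_scalars <;> field_simp
    have hN : Nf u v θx = dx⁻¹ := by
      rw [Nf, hvec, norm_smul, hx, Real.norm_eq_abs,
        abs_of_nonneg (inv_nonneg.mpr hdxpos.le), mul_one]
    rw [Rf, hvec, hN, inv_inv, smul_smul, mul_inv_cancel₀ hdxpos.ne', one_smul]
  have hRY : Rf u v θy = y := by
    set dy := ‖(⟨ay, byy⟩ : ℂ)‖ with hdy
    have hdypos : 0 < dy := norm_pos_iff.mpr hynz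
    have hcos : Real.cos θy = ay / dy := Complex.cos_arg hynz
    have hsin : Real.sin θy = byy / dy := Complex.sin_arg _
    have hvec : Real.cos θy • u + Real.sin θy • v = dy⁻¹ • y := by
      rw [hcos, hsin, ← hyc']
      match_scalars <;> field_simp
    have hN : Nf u v θy = dy⁻¹ := by
      rw [Nf, hvec, norm_smul, hy, Real.norm_eq_abs,
        abs_of_nonneg (inv_nonneg.mpr hdypos.le), mul_one]
    rw [Rf, hvec, hN, inv_inv, smul_smul, mul_inv_cancel₀ hdypos.ne', one_smul]
  have hdist : |θx - θy| ≤ 2 * π := by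
    have h1 := Complex.arg_le_pi (⟨ax, bx⟩ : ℂ)
    have h2 := Complex.neg_pi_lt_arg (⟨ax, bx⟩ : ℂ)
    have h3 := Complex.arg_le_pi (⟨ay, byy⟩ : ℂ)
    have h4 := Complex.neg_pi_lt_arg (⟨ay, byy⟩ : ℂ)
    rw [abs_le]
    constructor <;> [linarith ; linarith]
  have := arc_bound hu hv hA hdist
  rw [hRX, hRY] at this
  exact this

end Stmt8Aux

theorem stmt8 {V : Type*} [NormedAddCommGroup V] [NormedSpace ℝ V]
    (hdim : 2 ≤ Module.rank ℝ V)
    (x y : V) (hx : ‖x‖ = 1) (hy : ‖y‖ = 1) :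
    ENNReal.ofReal ‖x - y‖ ≤ intrinsicDist (fun w => ‖w‖) (Metric.sphere (0 : V) 1) x y ∧
      intrinsicDist (fun w => ‖w‖) (Metric.sphere (0 : V) 1) x y ≤
        ENNReal.ofReal (Real.sqrt 2 * π * ‖x - y‖) := by
  have hsqrt2 : (1.414:ℝ) ≤ Real.sqrt 2 := by
    rw [show (1.414:ℝ) = Real.sqrt (1.414^2) from (Real.sqrt_sq (by norm_num)).symm]
    apply Real.sqrt_le_sqrt
    norm_num
  have hpi : (3.141592:ℝ) ≤ π := Real.pi_gt_d6.le
  have hsqrt20 : (0:ℝ) ≤ Real.sqrt 2 := Real.sqrt_nonneg 2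
  have hkey : (4:ℝ) ≤ Real.sqrt 2 * π :=
    le_trans (by norm_num) (mul_le_mul hsqrt2 hpi (by norm_num) hsqrt20)
  constructor
  · exact Stmt8Aux.lower_bound x y
  · by_cases hr : ‖y - x‖ ≤ 1
    · refine le_trans (Stmt8Aux.upper_segment x y hx hy hr) (ENNReal.ofReal_le_ofReal ?_)
      rw [show ‖x - y‖ = ‖y - x‖ from norm_sub_rev x y]
      nlinarith [mul_le_mul_of_nonneg_right hkey (norm_nonneg (y - x))]
    · push_neg at hr
      have hr' : 1 ≤ ‖x - y‖ := by
        rw [norm_sub_rev]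
        linarith
      refine le_trans (Stmt8Aux.upper_arc hdim x y hx hy hr') (ENNReal.ofReal_le_ofReal ?_)
      nlinarith [mul_le_mul_of_nonneg_left hr' (by linarith : (0:ℝ) ≤ Real.sqrt 2 * π)]
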